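/- Let t ≥ 2 be an integer and n a positive integer. If there exists a Butson Hadamard matrix in BH(n, 2^t), then there exists a real Hadamard matrix of order 2^{2^{t-1}-1}·n. -/

import Mathlib

/-- A Butson Hadamard matrix with entries in the `k`-th roots of unity:
every entry is a `k`-th root of unity and `H * Hᴴ = n • 1` where `n` is the order. -/
def IsButson {ι : Type*} [Fintype ι] [DecidableEq ι] (k : ℕ) (H : Matrix ι ι ℂ) : Prop :=
  (∀ i j, H i j ^ k = 1) ∧ H * H.conjTranspose = (Fintype.card ι : ℂ) • 1

/-- A real Hadamard matrix: entries in `{±1}` and `H * Hᵀ = n • 1`. -/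
def IsHadamard {ι : Type*} [Fintype ι] [DecidableEq ι] (H : Matrix ι ι ℝ) : Prop :=
  (∀ i j, H i j = 1 ∨ H i j = -1) ∧ H * H.transpose = (Fintype.card ι : ℝ) • 1

open Polynomial Finset Kronecker
open Matrix hiding IsHadamard

noncomputable section

/-- Powers of the negacyclic shift of size `d`, with explicit formula. -/
def negC (d a : ℕ) : Matrix (Fin d) (Fin d) ℝ :=
  Matrix.of fun x y => if (x : ℕ) = ((y : ℕ) + a) % d then (-1 : ℝ) ^ (((y : ℕ) + a) / d) else 0

lemma negC_apply (d a : ℕ) (x y : Fin d) :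
    negC d a x y = if (x : ℕ) = ((y : ℕ) + a) % d then (-1 : ℝ) ^ (((y : ℕ) + a) / d) else 0 := rfl

lemma negC_zero (d : ℕ) : negC d 0 = 1 := by
  ext x y
  have hy : ((y : ℕ) + 0) % d = (y : ℕ) := by rw [Nat.add_zero, Nat.mod_eq_of_lt y.isLt]
  have hy2 : ((y : ℕ) + 0) / d = 0 := by rw [Nat.add_zero]; exact Nat.div_eq_of_lt y.isLt
  rw [negC_apply, hy, hy2, pow_zero, Matrix.one_apply]
  simp [Fin.ext_iff]

lemma negC_mul (d a b : ℕ) : negC d a * negC d b = negC d (a + b) := by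
  rcases Nat.eq_zero_or_pos d with rfl | hd
  · ext x; exact x.elim0
  ext x z
  have hlt : ((z : ℕ) + b) % d < d := Nat.mod_lt _ hd
  rw [Matrix.mul_apply, Finset.sum_eq_single (⟨((z : ℕ) + b) % d, hlt⟩ : Fin d)]
  · have hmod : (((z : ℕ) + b) % d + a) % d = ((z : ℕ) + (a + b)) % d := by
      rw [Nat.mod_add_mod]; congr 1; omega
    have hdiv : (((z : ℕ) + b) % d + a) / d + ((z : ℕ) + b) / d = ((z : ℕ) + (a + b)) / d := by
      have h0 := Nat.div_add_mod ((z : ℕ) + b) d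
      have h1 : (z : ℕ) + (a + b) = d * (((z : ℕ) + b) / d) + ((((z : ℕ) + b) % d) + a) := by
        omega
      rw [h1, Nat.mul_add_div hd]
      omega
    rw [negC_apply, negC_apply, negC_apply]
    simp only [if_pos rfl, if_true, ← hmod]
    by_cases hx : (x : ℕ) = (((z : ℕ) + b) % d + a) % d
    · rw [if_pos hx, if_pos hx, ← pow_add, hdiv]
    · rw [if_neg hx, if_neg hx, zero_mul]
  · intro y _ hy
    have : (y : ℕ) ≠ ((z : ℕ) + b) % d := by
      intro hc
      exact hy (Fin.ext hc)
    rw [negC_apply (d := d) b y z, if_neg this, mul_zero]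
  · intro hmem
    exact absurd (Finset.mem_univ _) hmem

lemma negC_pow (d : ℕ) : ∀ a : ℕ, negC d 1 ^ a = negC d a
  | 0 => by rw [pow_zero, negC_zero]
  | (a + 1) => by rw [pow_succ, negC_pow d a, negC_mul]

lemma negC_d (d : ℕ) (hd : 0 < d) : negC d d = -1 := by
  ext x y
  have h1 : ((y : ℕ) + d) % d = (y : ℕ) := by
    rw [Nat.add_mod_right, Nat.mod_eq_of_lt y.isLt]
  have h2 : ((y : ℕ) + d) / d = 1 := by
    rw [Nat.add_div_right _ hd, Nat.div_eq_of_lt y.isLt]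
  rw [negC_apply, h1, h2, pow_one, Matrix.neg_apply, Matrix.one_apply]
  simp [Fin.ext_iff, apply_ite (fun r : ℝ => -r)]

lemma negC_transpose (d : ℕ) (hd : 0 < d) : (negC d 1)ᵀ = negC d (2 * d - 1) := by
  ext x y
  have hx := x.isLt
  have hy := y.isLt
  have h1 : ((x : ℕ) + 1) % d = if (x : ℕ) + 1 = d then 0 else (x : ℕ) + 1 := by
    split
    · rename_i h; rw [h, Nat.mod_self]
    · exact Nat.mod_eq_of_lt (by omega)
  have h2 : ((x : ℕ) + 1) / d = if (x : ℕ) + 1 = d then 1 else 0 := by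
    split
    · rename_i h; rw [h, Nat.div_self hd]
    · exact Nat.div_eq_of_lt (by omega)
  have h3 : ((y : ℕ) + (2 * d - 1)) % d = if (y : ℕ) = 0 then d - 1 else (y : ℕ) - 1 := by
    split
    · rename_i h
      have he : (y : ℕ) + (2 * d - 1) = (d - 1) + d := by omega
      rw [he, Nat.add_mod_right, Nat.mod_eq_of_lt (show d - 1 < d by omega)]
    · rename_i h
      have he : (y : ℕ) + (2 * d - 1) = ((y : ℕ) - 1) + d + d := by omega
      rw [he, Nat.add_mod_right, Nat.add_mod_right, Nat.mod_eq_of_lt (show (y:ℕ) - 1 < d by omega)]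
  have h4 : ((y : ℕ) + (2 * d - 1)) / d = if (y : ℕ) = 0 then 1 else 2 := by
    split
    · rename_i h
      have he : (y : ℕ) + (2 * d - 1) = (d - 1) + d := by omega
      rw [he, Nat.add_div_right _ hd, Nat.div_eq_of_lt (show d - 1 < d by omega)]
    · rename_i h
      have he : (y : ℕ) + (2 * d - 1) = ((y : ℕ) - 1) + d + d := by omega
      rw [he, Nat.add_div_right _ hd, Nat.add_div_right _ hd, Nat.div_eq_of_lt (show (y:ℕ) - 1 < d by omega)]
  rw [Matrix.transpose_apply, negC_apply, negC_apply, h1, h2, h3, h4]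
  split_ifs <;> first | rfl | omega | norm_num <;> omega


lemma neg_one_pow_mod2 {m n : ℕ} (h : m % 2 = n % 2) : (-1 : ℝ) ^ m = (-1 : ℝ) ^ n := by
  rcases Nat.even_or_odd m with hm | hm
  · rw [hm.neg_one_pow, (Nat.even_iff.2 (by rw [← h]; exact Nat.even_iff.1 hm)).neg_one_pow]
  · rw [hm.neg_one_pow, (Nat.odd_iff.2 (by rw [← h]; exact Nat.odd_iff.1 hm)).neg_one_pow]

lemma zmod2_pow_add (a b : ZMod 2) :
    (-1 : ℝ) ^ ((a + b).val) = (-1 : ℝ) ^ a.val * (-1 : ℝ) ^ b.val := by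
  rw [← pow_add]
  refine neg_one_pow_mod2 ?_
  revert a b
  decide

/-- Sylvester-type Hadamard matrix of order `2 ^ r`. -/
def syl (r : ℕ) : Matrix (Fin r → ZMod 2) (Fin r → ZMod 2) ℝ :=
  Matrix.of fun x y => (-1 : ℝ) ^ (∑ i, (x i * y i).val)

lemma syl_apply (r : ℕ) (x y : Fin r → ZMod 2) :
    syl r x y = (-1 : ℝ) ^ (∑ i, (x i * y i).val) := rfl

lemma syl_isHadamard (r : ℕ) : IsHadamard (syl r) := by
  constructor
  · intro x y
    rcases Nat.even_or_odd (∑ i, (x i * y i).val) with h | h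
    · exact Or.inl (h.neg_one_pow)
    · exact Or.inr (h.neg_one_pow)
  · ext x y
    rw [Matrix.mul_apply, Matrix.smul_apply, Matrix.one_apply]
    have hterm : ∀ z : Fin r → ZMod 2,
        syl r x z * (syl r)ᵀ z y = ∏ i, (-1 : ℝ) ^ (((x i + y i) * z i).val) := by
      intro z
      rw [Matrix.transpose_apply, syl_apply, syl_apply,
        ← Finset.prod_pow_eq_pow_sum, ← Finset.prod_pow_eq_pow_sum, ← Finset.prod_mul_distrib]
      refine Finset.prod_congr rfl fun i _ => ?_
      rw [add_mul, zmod2_pow_add]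
    rw [Finset.sum_congr rfl fun z _ => hterm z]
    by_cases hxy : x = y
    · subst hxy
      have : ∀ z : Fin r → ZMod 2, ∏ i, (-1 : ℝ) ^ (((x i + x i) * z i).val) = 1 := by
        intro z
        refine Finset.prod_eq_one fun i _ => ?_
        have hx : x i + x i = 0 := by
          have : ∀ a : ZMod 2, a + a = 0 := by decide
          exact this _
        rw [hx, zero_mul, ZMod.val_zero, pow_zero]
      rw [Finset.sum_congr rfl fun z _ => this z, if_pos rfl]
      simp [Finset.card_univ]
    · rw [if_neg hxy, smul_zero]
      obtain ⟨i₀, hi₀⟩ := Function.ne_iff.mp hxy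
      have hpar : ∀ u : ZMod 2,
          ((((x i₀ + y i₀) * u).val) + (((x i₀ + y i₀) * (u + 1)).val)) % 2 = 1 := by
        have hgen : ∀ a b u : ZMod 2, a ≠ b →
            ((((a + b) * u).val) + (((a + b) * (u + 1)).val)) % 2 = 1 := by decide
        exact fun u => hgen _ _ u hi₀
      have hkey : ∀ u : ZMod 2,
          (-1 : ℝ) ^ (((x i₀ + y i₀) * u).val) + (-1 : ℝ) ^ (((x i₀ + y i₀) * (u + 1)).val) = 0 := by
        intro u
        have h := hpar u
        rcases Nat.even_or_odd (((x i₀ + y i₀) * u).val) with hm | hm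
        · rw [hm.neg_one_pow, (Nat.odd_iff.2 (by rw [Nat.even_iff] at hm; omega)).neg_one_pow]
          ring
        · rw [hm.neg_one_pow, (Nat.even_iff.2 (by rw [Nat.odd_iff] at hm; omega)).neg_one_pow]
          ring
      refine Finset.sum_ninvolution (fun z => Function.update z i₀ (z i₀ + 1)) ?_ ?_
        (fun _ => Finset.mem_univ _) ?_
      · intro z
        have hsplit : ∀ w : Fin r → ZMod 2,
            ∏ i, (-1 : ℝ) ^ (((x i + y i) * w i).val)
              = (-1 : ℝ) ^ (((x i₀ + y i₀) * w i₀).val) * ∏ i ∈ Finset.univ.erase i₀,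
                  (-1 : ℝ) ^ (((x i + y i) * w i).val) := by
          intro w
          rw [← Finset.mul_prod_erase Finset.univ _ (Finset.mem_univ i₀)]
        rw [hsplit z, hsplit (Function.update z i₀ (z i₀ + 1))]
        have hrest : ∏ i ∈ Finset.univ.erase i₀,
            (-1 : ℝ) ^ (((x i + y i) * (Function.update z i₀ (z i₀ + 1)) i).val)
              = ∏ i ∈ Finset.univ.erase i₀, (-1 : ℝ) ^ (((x i + y i) * z i).val) := by
          refine Finset.prod_congr rfl fun i hi => ?_
          rw [Function.update_of_ne (Finset.ne_of_mem_erase hi)]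
        rw [hrest, Function.update_self, ← add_mul, hkey, zero_mul]
      · intro z _ hcon
        have := congrFun hcon i₀
        simp only [Function.update_self] at this
        have h2 : ∀ a : ZMod 2, a + 1 ≠ a := by decide
        exact h2 _ this
      · intro z
        funext j
        by_cases hj : j = i₀
        · subst hj
          simp only [Function.update_self]
          have h2 : ∀ a : ZMod 2, a + 1 + 1 = a := by decide
          exact h2 _
        · simp only [Function.update_of_ne hj]


lemma rep_sum {F : Type*} [Fintype F] [DecidableEq F] {t : ℕ} (ht : 2 ≤ t)
    (N : Matrix F F ℝ) (hNd : N ^ (2 ^ (t - 1)) = -1)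
    {ζ : ℂ} (hζ : IsPrimitiveRoot ζ (2 ^ t)) {n : ℕ} (a : Fin n → ℕ) (c : ℕ)
    (h : ∑ k, ζ ^ (a k) = (c : ℂ)) : ∑ k, N ^ (a k) = (c : ℝ) • 1 := by
  have hq : 0 < 2 ^ t := pow_pos two_pos t
  have hcyc : Polynomial.cyclotomic (2 ^ t) ℚ = X ^ (2 ^ (t - 1)) + 1 := by
    have h1 : 2 ^ t = 2 ^ ((t - 1) + 1) := by congr 1; omega
    rw [h1, Polynomial.cyclotomic_prime_pow_eq_geom_sum Nat.prime_two]
    rw [Finset.sum_range_succ, Finset.sum_range_one, pow_zero, pow_one]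
    ring
  set p : ℚ[X] := (∑ k, (X : ℚ[X]) ^ (a k)) - Polynomial.C (c : ℚ) with hp
  have hzero : Polynomial.aeval ζ p = 0 := by
    rw [hp, map_sub, map_sum]
    simp only [map_pow, Polynomial.aeval_X, Polynomial.aeval_C]
    rw [h]
    simp
  have hdvd : minpoly ℚ ζ ∣ p := minpoly.dvd ℚ ζ hzero
  rw [← Polynomial.cyclotomic_eq_minpoly_rat hζ hq, hcyc] at hdvd
  obtain ⟨g, hg⟩ := hdvd
  have hN := congrArg (Polynomial.aeval N) hg
  rw [_root_.map_mul, map_add, map_pow, Polynomial.aeval_X, _root_.map_one, hNd, neg_add_cancel,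
    zero_mul] at hN
  rw [hp, map_sub, map_sum] at hN
  simp only [map_pow, Polynomial.aeval_X, Polynomial.aeval_C] at hN
  have hC : (algebraMap ℚ (Matrix F F ℝ)) ((c : ℚ)) = (c : ℝ) • (1 : Matrix F F ℝ) := by
    rw [map_natCast]
    rw [show ((c : ℝ) • (1 : Matrix F F ℝ)) = ((c : ℕ) : Matrix F F ℝ) by
      rw [Nat.cast_smul_eq_nsmul ℝ, nsmul_eq_mul, mul_one]]
  rw [hC] at hN
  rw [sub_eq_zero] at hN
  exact hN


lemma isHadamard_transfer {ι κ : Type*} [Fintype ι] [DecidableEq ι] [Fintype κ] [DecidableEq κ]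
    (e : ι ≃ κ) {M : Matrix ι ι ℝ} (hM : IsHadamard M) :
    IsHadamard (M.submatrix e.symm e.symm) := by
  obtain ⟨h1, h2⟩ := hM
  refine ⟨fun i j => h1 _ _, ?_⟩
  rw [Matrix.transpose_submatrix, Matrix.submatrix_mul_equiv, h2, Fintype.card_congr e]
  ext i j
  simp [Matrix.submatrix_apply, Matrix.one_apply, Matrix.smul_apply,
    Equiv.apply_eq_iff_eq]

lemma key (n d s t : ℕ) (ht : 2 ≤ t) (hd : d = 2 ^ (t - 1)) (hd0 : 0 < d)
    (A : Matrix (Fin d × Fin s) (Fin d × Fin s) ℝ) (hA : IsHadamard A)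
    (H : Matrix (Fin n) (Fin n) ℂ) (hent : ∀ i j, H i j ^ (2 ^ t) = 1)
    (horth : H * H.conjTranspose = (n : ℂ) • 1) :
    ∃ M : Matrix (Fin n × Fin d × Fin s) (Fin n × Fin d × Fin s) ℝ, IsHadamard M := by
  classical
  obtain ⟨hA1, hA2⟩ := hA
  have hq0 : (2 : ℕ) ^ t ≠ 0 := (pow_pos two_pos t).ne'
  have hq2d : (2 : ℕ) ^ t = 2 * d := by
    have h1 : (2 : ℕ) ^ t = 2 ^ ((t - 1) + 1) := by congr 1; omega
    rw [h1, pow_succ', hd]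
  set ζ : ℂ := Complex.exp (2 * Real.pi * Complex.I / (2 ^ t : ℕ)) with hζdef
  have hζ : IsPrimitiveRoot ζ ((2 : ℕ) ^ t) := Complex.isPrimitiveRoot_exp _ hq0
  have : NeZero ((2 : ℕ) ^ t) := ⟨hq0⟩
  choose e he1 he2 using fun i j => hζ.eq_pow_of_pow_eq_one (hent i j)
  -- the real representation `N` of the cyclic group of order `2 ^ t`
  set N : Matrix (Fin d × Fin s) (Fin d × Fin s) ℝ :=
    (negC d 1) ⊗ₖ (1 : Matrix (Fin s) (Fin s) ℝ) with hNdef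
  have hNpow : ∀ a : ℕ, N ^ a = (negC d a) ⊗ₖ (1 : Matrix (Fin s) (Fin s) ℝ) := by
    intro a
    induction a with
    | zero => rw [pow_zero, negC_zero, Matrix.one_kronecker_one]
    | succ a ih =>
        have hk := Matrix.mul_kronecker_mul (negC d a) (negC d 1)
          (1 : Matrix (Fin s) (Fin s) ℝ) (1 : Matrix (Fin s) (Fin s) ℝ)
        rw [pow_succ, ih, hNdef, ← hk, negC_mul, one_mul]
  have hNd2 : N ^ d = -1 := by
    rw [hNpow, negC_d d hd0]
    ext ⟨x, u⟩ ⟨y, v⟩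
    simp only [Matrix.kroneckerMap_apply, Matrix.neg_apply, Matrix.one_apply, Prod.mk.injEq]
    by_cases hxy : x = y <;> by_cases huv : u = v <;> simp [hxy, huv]
  have hNT1 : Nᵀ = N ^ (2 * d - 1) := by
    rw [hNpow, hNdef, ← Matrix.kroneckerMap_transpose, Matrix.transpose_one,
      negC_transpose d hd0]
  have hNT : ∀ b : ℕ, (N ^ b)ᵀ = N ^ ((2 * d - 1) * b) := by
    intro b
    rw [Matrix.transpose_pow, hNT1, ← pow_mul]
  -- entries of `A * N ^ a` are signs
  have hAN : ∀ (a : ℕ) (i j : Fin d × Fin s),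
      (A * N ^ a) i j = 1 ∨ (A * N ^ a) i j = -1 := by
    intro a i j
    obtain ⟨y, v⟩ := j
    have hlt : ((y : ℕ) + a) % d < d := Nat.mod_lt _ hd0
    have hval : (A * N ^ a) i (y, v)
        = A i (⟨((y : ℕ) + a) % d, hlt⟩, v) * (-1 : ℝ) ^ (((y : ℕ) + a) / d) := by
      rw [hNpow, Matrix.mul_apply]
      rw [Finset.sum_eq_single ((⟨((y : ℕ) + a) % d, hlt⟩ : Fin d), v)]
      · rw [Matrix.kroneckerMap_apply, negC_apply, if_pos rfl, Matrix.one_apply_eq, mul_one]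
      · intro z _ hz
        rcases z with ⟨z1, z2⟩
        rw [Matrix.kroneckerMap_apply, negC_apply]
        by_cases h1 : (z1 : ℕ) = ((y : ℕ) + a) % d
        · have hz1 : z1 = (⟨((y : ℕ) + a) % d, hlt⟩ : Fin d) := Fin.ext h1
          have hz2 : z2 ≠ v := by
            intro hc; exact hz (by rw [hz1, hc])
          rw [Matrix.one_apply_ne hz2, mul_zero, mul_zero]
        · rw [if_neg h1, zero_mul, mul_zero]
      · intro hmem; exact absurd (Finset.mem_univ _) hmem
    rw [hval]
    rcases hA1 i (⟨((y : ℕ) + a) % d, hlt⟩, v) with h | h <;>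
      rcases Nat.even_or_odd (((y : ℕ) + a) / d) with hp | hp <;>
        rw [h, hp.neg_one_pow] <;> norm_num
  -- orthogonality sums transported to `N`
  have hsums : ∀ i j : Fin n, ∑ k, N ^ (e i k + (2 * d - 1) * e j k)
      = ((if i = j then n else 0 : ℕ) : ℝ) • 1 := by
    intro i j
    refine rep_sum ht N (by rw [← hd]; exact hNd2) hζ _ _ ?_
    have habs : ∀ k, ‖H j k‖ = 1 := by
      intro k
      have h1 : ‖H j k‖ ^ (2 ^ t) = 1 := by rw [← norm_pow, hent, norm_one]
      rcases lt_trichotomy (‖H j k‖) 1 with hlt | heq | hgt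
      · exfalso
        have := pow_lt_one₀ (norm_nonneg _) hlt hq0
        rw [h1] at this; exact lt_irrefl _ this
      · exact heq
      · exfalso
        have := one_lt_pow₀ hgt hq0
        rw [h1] at this; exact lt_irrefl _ this
    have hconj : ∀ k, ζ ^ ((2 * d - 1) * e j k) = (starRingEnd ℂ) (H j k) := by
      intro k
      rw [← Complex.inv_eq_conj (habs k), ← he2 j k]
      rw [mul_comm, pow_mul]
      refine eq_inv_of_mul_eq_one_left ?_
      rw [← pow_succ, show (2 * d - 1) + 1 = 2 * d by omega, ← pow_mul, mul_comm (e j k),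
        pow_mul, ← hq2d, hζ.pow_eq_one, one_pow]
    have hterm : ∀ k, ζ ^ (e i k + (2 * d - 1) * e j k)
        = H i k * (starRingEnd ℂ) (H j k) := by
      intro k
      rw [pow_add, he2 i k, hconj k]
    rw [Finset.sum_congr rfl fun k _ => hterm k]
    have h0 : (H * H.conjTranspose) i j = ((n : ℂ) • (1 : Matrix (Fin n) (Fin n) ℂ)) i j := by
      rw [horth]
    rw [Matrix.mul_apply] at h0
    simp only [Matrix.conjTranspose_apply, Matrix.smul_apply, Matrix.one_apply,
      smul_eq_mul, Complex.star_def] at h0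
    rw [h0]
    split_ifs <;> simp
  -- the block matrix
  set M : Matrix (Fin n × Fin d × Fin s) (Fin n × Fin d × Fin s) ℝ :=
    Matrix.of fun p r => (A * N ^ (e p.1 r.1)) p.2 r.2 with hMdef
  refine ⟨M, fun p r => hAN _ _ _, ?_⟩
  ext ⟨i, x⟩ ⟨j, y⟩
  rw [Matrix.mul_apply, Fintype.sum_prod_type]
  have hblock : ∀ k : Fin n,
      ∑ z : Fin d × Fin s, M (i, x) (k, z) * M.transpose (k, z) (j, y)
        = (A * N ^ (e i k + (2 * d - 1) * e j k) * Aᵀ) x y := by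
    intro k
    have hz : ∀ z, M (i, x) (k, z) * M.transpose (k, z) (j, y)
        = (A * N ^ (e i k)) x z * ((A * N ^ (e j k))ᵀ) z y := by
      intro z
      rw [Matrix.transpose_apply, Matrix.transpose_apply]
      rfl
    rw [Finset.sum_congr rfl fun z _ => hz z, ← Matrix.mul_apply]
    rw [Matrix.transpose_mul, hNT (e j k), ← Matrix.mul_assoc, Matrix.mul_assoc A,
      ← pow_add]
  rw [Finset.sum_congr rfl fun k _ => hblock k]
  have hpull : ∑ k : Fin n, (A * N ^ (e i k + (2 * d - 1) * e j k) * Aᵀ) x y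
      = (A * (∑ k, N ^ (e i k + (2 * d - 1) * e j k)) * Aᵀ) x y := by
    rw [Matrix.mul_sum, Matrix.sum_mul, Matrix.sum_apply]
  rw [hpull, hsums i j, Matrix.mul_smul, Matrix.smul_mul, mul_one, hA2, smul_smul]
  simp only [Matrix.smul_apply, Matrix.one_apply, Prod.mk.injEq, smul_eq_mul,
    Fintype.card_prod, Fintype.card_fin]
  by_cases hij : i = j <;> by_cases hxy : x = y <;>
    simp [hij, hxy, Prod.ext_iff] <;> push_cast <;> ring

theorem stmt_2 (t n : ℕ) (ht : 2 ≤ t) (hn : 0 < n)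
    (h : ∃ H : Matrix (Fin n) (Fin n) ℂ, IsButson (2 ^ t) H) :
    ∃ M : Matrix (Fin (2 ^ (2 ^ (t - 1) - 1) * n)) (Fin (2 ^ (2 ^ (t - 1) - 1) * n)) ℝ,
      IsHadamard M := by
  classical
  obtain ⟨H, hent, horth⟩ := h
  have hd0 : 0 < 2 ^ (t - 1) := pow_pos two_pos _
  have hdvd : 2 ^ (t - 1) ∣ 2 ^ (2 ^ (t - 1) - 1) := by
    refine pow_dvd_pow 2 ?_
    have h1 : t - 1 < 2 ^ (t - 1) := Nat.lt_two_pow_self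
    omega
  obtain ⟨s, hs⟩ := hdvd
  have hcards : Fintype.card (Fin (2 ^ (t - 1) - 1) → ZMod 2)
      = Fintype.card (Fin (2 ^ (t - 1)) × Fin s) := by
    simp only [Fintype.card_fun, Fintype.card_fin, ZMod.card, Fintype.card_prod]
    rw [hs]
  have hA := isHadamard_transfer (Fintype.equivOfCardEq hcards)
    (syl_isHadamard (2 ^ (t - 1) - 1))
  obtain ⟨M, hM⟩ := key n (2 ^ (t - 1)) s t ht rfl hd0 _ hA H hent
    (by rw [horth]; simp)
  have hcardfin : Fintype.card (Fin n × Fin (2 ^ (t - 1)) × Fin s)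
      = Fintype.card (Fin (2 ^ (2 ^ (t - 1) - 1) * n)) := by
    simp only [Fintype.card_prod, Fintype.card_fin]
    rw [← hs]
    ring
  exact ⟨_, isHadamard_transfer (Fintype.equivOfCardEq hcardfin) hM⟩

end
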